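/- With the above setup, W_{γ',0} \ W_{γ,t} ⊆ B_t(γ) ∪ (W_{γ',0} \ U_γ^j)^{>γ_j}, where (W_{γ',0} \ U_γ^j)^{>γ_j} denotes the set of points β in W_{γ',0} \ U_γ^j with β_j > γ_j. -/
import Mathlib


open Metric


open Real Metric

lemma abs_lt_of_sq_lt (a b : ℝ) (h : a^2 < b^2) (hb : 0 ≤ b) : |a| < b :=
  lt_of_pow_lt_pow_left₀ 2 hb (by rwa [sq_abs])

lemma sqrt3_ge : (17/10 : ℝ) ≤ Real.sqrt 3 := by
  nlinarith [Real.sq_sqrt (show (0:ℝ) ≤ 3 by norm_num), Real.sqrt_nonneg 3]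

lemma sqrt36 : Real.sqrt 3 * Real.sqrt 6 = 3 * Real.sqrt 2 := by
  rw [← Real.sqrt_mul (by norm_num : (0:ℝ) ≤ 3)]
  rw [show (3*6:ℝ) = 3^2*2 by norm_num, Real.sqrt_mul (by positivity), Real.sqrt_sq (by norm_num)]

lemma trig_facts (θ₀ θ₁ : ℝ) (h0 : 0 ≤ θ₀) (h6 : θ₀ < Real.pi/6) (he : θ₁ = Real.pi/18 - θ₀/3) :
    (0 ≤ Real.sin θ₀ ∧ Real.sin θ₀ ≤ 1/2 ∧ 17/20 ≤ Real.cos θ₀ ∧ Real.cos θ₀ ≤ 1) ∧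
    (0 < Real.sin θ₁ ∧ Real.sin θ₁ ≤ 1/2 ∧ 17/20 ≤ Real.cos θ₁ ∧ Real.cos θ₁ ≤ 1) ∧
    (0 ≤ Real.sin (θ₀+θ₁) ∧ Real.sin (θ₀+θ₁) ≤ 1/2 ∧ 17/20 ≤ Real.cos (θ₀+θ₁)) ∧
    0 < Real.cos (Real.pi/3 + θ₀) ∧ 0 < Real.cos (Real.pi/3 + (θ₀+θ₁)) ∧
    0 < Real.cos (θ₀ + (θ₀+θ₁)) := by
  have hpi := Real.pi_pos
  have h1pos : 0 < θ₁ := by rw [he]; linarith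
  have h1le : θ₁ ≤ Real.pi/18 := by rw [he]; linarith
  have hsum : θ₀ + θ₁ < Real.pi/6 := by rw [he]; linarith
  have hs3 := sqrt3_ge
  have hs3n := Real.sqrt_nonneg 3
  -- cos θ₀ lower bound
  have hc0 : Real.sqrt 3/2 ≤ Real.cos θ₀ := by
    rw [← Real.cos_pi_div_six]
    exact Real.cos_le_cos_of_nonneg_of_le_pi h0 (by linarith) (le_of_lt h6)
  have hc0' : (17/20:ℝ) ≤ Real.cos θ₀ := by linarith
  have hs0 : 0 ≤ Real.sin θ₀ := Real.sin_nonneg_of_nonneg_of_le_pi h0 (by linarith)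
  have h3sq : Real.sqrt 3^2 = 3 := Real.sq_sqrt (by norm_num)
  have hs0' : Real.sin θ₀ ≤ 1/2 := by
    nlinarith [Real.sin_sq_add_cos_sq θ₀, hc0, hs0, h3sq, sq_nonneg (Real.cos θ₀ - Real.sqrt 3/2)]
  have hc1 : Real.sqrt 3/2 ≤ Real.cos θ₁ := by
    rw [← Real.cos_pi_div_six]
    exact Real.cos_le_cos_of_nonneg_of_le_pi (le_of_lt h1pos) (by linarith) (by linarith)
  have hc1' : (17/20:ℝ) ≤ Real.cos θ₁ := by linarith
  have hs1 : 0 < Real.sin θ₁ := Real.sin_pos_of_pos_of_lt_pi h1pos (by linarith)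
  have hs1' : Real.sin θ₁ ≤ 1/2 := by nlinarith [Real.sin_sq_add_cos_sq θ₁, hc1, hs1, h3sq, sq_nonneg (Real.cos θ₁ - Real.sqrt 3/2)]
  have hcs : Real.sqrt 3/2 ≤ Real.cos (θ₀+θ₁) := by
    rw [← Real.cos_pi_div_six]
    exact Real.cos_le_cos_of_nonneg_of_le_pi (by linarith) (by linarith) (by linarith)
  have hss : 0 ≤ Real.sin (θ₀+θ₁) := Real.sin_nonneg_of_nonneg_of_le_pi (by linarith) (by linarith)
  have hss' : Real.sin (θ₀+θ₁) ≤ 1/2 := by nlinarith [Real.sin_sq_add_cos_sq (θ₀+θ₁), hcs, hss, h3sq, sq_nonneg (Real.cos (θ₀+θ₁) - Real.sqrt 3/2)]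
  refine ⟨⟨hs0, hs0', hc0', Real.cos_le_one _⟩, ⟨hs1, hs1', hc1', Real.cos_le_one _⟩,
    ⟨hss, hss', by linarith⟩, ?_, ?_, ?_⟩
  · exact Real.cos_pos_of_mem_Ioo ⟨by linarith, by linarith⟩
  · exact Real.cos_pos_of_mem_Ioo ⟨by linarith, by linarith⟩
  · exact Real.cos_pos_of_mem_Ioo ⟨by linarith, by linarith⟩


set_option maxHeartbeats 1000000 in
lemma sinadd (s₀ c₀ s₁ c₁ mu mw X Y D K : ℝ)
    (p0 : s₀^2+c₀^2 = 1) (p1 : s₁^2+c₁^2 = 1)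
    (hs₀ : 0 ≤ s₀) (hs₀' : s₀ ≤ 1/2) (hc₀ : 17/20 ≤ c₀)
    (hs₁ : 0 ≤ s₁) (hs₁' : s₁ ≤ 1/2) (hc₁ : 17/20 ≤ c₁)
    (hmu : 0 < mu) (hmw : 0 < mw)
    (hX : 0 ≤ X) (hY : 0 ≤ Y) (hD : 0 ≤ D) (hK : 0 ≤ K)
    (hXY : X^2+Y^2 = mu^2) (hDK : D^2+K^2 = mu^2*mw^2)
    (hYb : Y ≤ s₀*mu) (hKb : K < s₁*(mu*mw)) :
    Y*D + X*K < (s₀*c₁+c₀*s₁)*(mu^2*mw) := by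
  have hmw2 : 0 < mu*mw := mul_pos hmu hmw
  have hc₀0 : (0:ℝ) ≤ c₀ := by linarith
  have hc₁0 : (0:ℝ) ≤ c₁ := by linarith
  have hXc : c₀*mu ≤ X := by
    have h1 : (c₀*mu)^2 ≤ X^2 := by nlinarith [mul_self_le_mul_self hY hYb, hXY, p0]
    nlinarith [h1, mul_nonneg hc₀0 hmu.le, hX]
  have hDc : c₁*(mu*mw) ≤ D := by
    have h1 : (c₁*(mu*mw))^2 ≤ D^2 := by nlinarith [mul_self_le_mul_self hK hKb.le, hDK, p1]
    nlinarith [h1, mul_nonneg hc₁0 hmw2.le, hD]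
  have hYmu : Y ≤ mu/2 := by
    have := mul_le_mul_of_nonneg_right hs₀' hmu.le
    linarith
  have hs₀mu : s₀*mu ≤ mu/2 := by
    have := mul_le_mul_of_nonneg_right hs₀' hmu.le
    linarith
  have hs₁mw : s₁*(mu*mw) ≤ (mu*mw)/2 := by
    have := mul_le_mul_of_nonneg_right hs₁' hmw2.le
    linarith
  have hKmu : K ≤ mu*mw/2 := by linarith
  have hXlb : 17/20*mu ≤ X := by
    have := mul_le_mul_of_nonneg_right hc₀ hmu.le
    linarith
  have hDlb : 17/20*(mu*mw) ≤ D := by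
    have := mul_le_mul_of_nonneg_right hc₁ hmw2.le
    linarith
  have pos1 : 0 < X + c₀*mu := by nlinarith [mul_nonneg hc₀0 hmu.le]
  have pos2 : 0 < D + c₁*(mu*mw) := by nlinarith [mul_nonneg hc₁0 hmw2.le]
  have t1 : (17/20*(mu*mw))*(17/10*mu) ≤ D*(X+c₀*mu) := by
    apply mul_le_mul hDlb _ (by linarith) (by linarith)
    have := mul_le_mul_of_nonneg_right hc₀ hmu.le
    linarith
  have t2 : K*(s₀*mu+Y) ≤ (mu*mw/2)*mu :=
    mul_le_mul hKmu (by linarith) (by linarith [mul_nonneg hs₀ hmu.le]) (by linarith)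
  have bracket1 : 0 ≤ D*(X+c₀*mu) - K*(s₀*mu+Y) := by
    nlinarith [t1, t2, mul_pos (mul_pos hmu hmu) hmw]
  have claimI : Y*D + X*K ≤ s₀*mu*D + c₀*mu*K := by
    have e1 : (s₀*mu*D + c₀*mu*K - (Y*D + X*K))*(X + c₀*mu)
        = (s₀*mu - Y)*(D*(X+c₀*mu) - K*(s₀*mu+Y)) := by
      linear_combination (-K)*hXY + K*mu^2*p0
    have h2 : 0 ≤ (s₀*mu - Y)*(D*(X+c₀*mu) - K*(s₀*mu+Y)) :=
      mul_nonneg (by linarith) bracket1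
    nlinarith [e1, h2, pos1]
  have hc₁mw : 17/20*(mu*mw) ≤ c₁*(mu*mw) := mul_le_mul_of_nonneg_right hc₁ hmw2.le
  have t3 : (17/20)*(17/10*(mu*mw)) ≤ c₀*(D + c₁*(mu*mw)) :=
    mul_le_mul hc₀ (by linarith) (by linarith) (by linarith)
  have t4 : s₀*(s₁*(mu*mw) + K) ≤ (1/2)*(mu*mw) := by
    have h5 : s₁*(mu*mw) + K ≤ mu*mw := by linarith
    calc s₀*(s₁*(mu*mw) + K) ≤ (1/2)*(s₁*(mu*mw)+K) :=
          mul_le_mul_of_nonneg_right hs₀' (by linarith [mul_nonneg hs₁ hmw2.le])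
      _ ≤ (1/2)*(mu*mw) := by linarith
  have bracket2 : 0 < c₀*(D + c₁*(mu*mw)) - s₀*(s₁*(mu*mw) + K) := by
    nlinarith [t3, t4, hmw2]
  have claimII : s₀*mu*D + c₀*mu*K < (s₀*c₁+c₀*s₁)*(mu^2*mw) := by
    have e2 : ((s₀*c₁+c₀*s₁)*(mu^2*mw) - (s₀*mu*D + c₀*mu*K))*(D + c₁*(mu*mw))
        = mu*(s₁*(mu*mw) - K)*(c₀*(D+c₁*(mu*mw)) - s₀*(s₁*(mu*mw)+K)) := by
      linear_combination (-(s₀*mu))*hDK + s₀*mu*(mu^2*mw^2)*p1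
    have h2' : 0 < mu*(s₁*(mu*mw) - K)*(c₀*(D+c₁*(mu*mw)) - s₀*(s₁*(mu*mw)+K)) :=
      mul_pos (mul_pos hmu (by linarith)) bracket2
    nlinarith [e2, h2', pos2]
  linarith

set_option maxHeartbeats 1000000 in
lemma master (θ₀ θ₁ : ℝ) (h0 : 0 ≤ θ₀) (h6 : θ₀ < Real.pi/6) (he : θ₁ = Real.pi/18 - θ₀/3)
    (Xu Yu Xu' Yu' Xw Yw mu mu' mw : ℝ)
    (hmu : mu^2 = Xu^2+Yu^2) (hmu' : mu'^2 = Xu'^2+Yu'^2) (hmw : mw^2 = Xw^2+Yw^2)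
    (hmu0 : 0 < mu) (hmu'0 : 0 < mu') (hmw0 : 0 < mw)
    (hcu : Real.cos θ₀ * mu < |Xu|) (hcu' : Real.cos θ₀ * mu' < |Xu'|)
    (hcl : (Xw-Xu)^2 + (Yw-Yu)^2 < (Real.sin θ₁)^2 * mw^2)
    (hcl' : (Xw-Xu')^2 + (Yw-Yu')^2 < mw^2) :
    |Yw| < Real.sin (θ₀+θ₁) * mw ∧ Real.cos (θ₀+θ₁) * mw < |Xw| ∧
      (0 < Xu' → 0 < Xw) ∧ (Xu' < 0 → Xw < 0) := by
  obtain ⟨⟨hs0, hs0', hc0', hc0''⟩, ⟨hs1, hs1', hc1', hc1''⟩, ⟨hss, hss', hcs⟩, hq0, hq1, hq2⟩ :=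
    trig_facts θ₀ θ₁ h0 h6 he
  set s₀ := Real.sin θ₀
  set c₀ := Real.cos θ₀
  set s₁ := Real.sin θ₁
  set c₁ := Real.cos θ₁
  set S := Real.sin (θ₀+θ₁) with hSdef
  set C := Real.cos (θ₀+θ₁) with hCdef
  have p0 : s₀^2+c₀^2 = 1 := Real.sin_sq_add_cos_sq θ₀
  have p1 : s₁^2+c₁^2 = 1 := Real.sin_sq_add_cos_sq θ₁
  have pS : S^2 + C^2 = 1 := Real.sin_sq_add_cos_sq _
  have hSexp : S = s₀*c₁ + c₀*s₁ := Real.sin_add θ₀ θ₁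
  have hmuw : 0 < mu*mw := mul_pos hmu0 hmw0
  set cross := Xu*Yw - Yu*Xw with hcrossdef
  set dot := Xu*Xw + Yu*Yw with hdotdef
  set T := Xu*(Xw-Xu) + Yu*(Yw-Yu) with hTdef
  have lag : dot^2 + cross^2 = mu^2*mw^2 := by
    have h : dot^2 + cross^2 = (Xu^2+Yu^2)*(Xw^2+Yw^2) := by ring
    rw [h, ← hmu, ← hmw]
  have lagT : T^2 + cross^2 = mu^2*((Xw-Xu)^2+(Yw-Yu)^2) := by
    have h : T^2 + cross^2 = (Xu^2+Yu^2)*((Xw-Xu)^2+(Yw-Yu)^2) := by ring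
    rw [h, ← hmu]
  have hs1muw : 0 ≤ s₁*(mu*mw) := mul_nonneg hs1.le hmuw.le
  have hclmu : mu^2*((Xw-Xu)^2+(Yw-Yu)^2) < (s₁*(mu*mw))^2 := by
    have h := mul_lt_mul_of_pos_left hcl (by positivity : (0:ℝ) < mu^2)
    have h2 : (s₁*(mu*mw))^2 = mu^2*(s₁^2*mw^2) := by ring
    linarith
  have hcross : |cross| < s₁*(mu*mw) := by
    apply abs_lt_of_sq_lt _ _ _ hs1muw
    have := sq_nonneg T
    linarith
  have hT : |T| < s₁*(mu*mw) := by
    apply abs_lt_of_sq_lt _ _ _ hs1muw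
    have := sq_nonneg cross
    linarith
  have hTlb : -(s₁*(mu*mw)) < T := (abs_lt.mp hT).1
  have hTub : T < s₁*(mu*mw) := (abs_lt.mp hT).2
  have hmulb : (1-s₁)*mw < mu := by
    have hexp : mw^2 = mu^2 + 2*T + ((Xw-Xu)^2+(Yw-Yu)^2) := by
      rw [hmw, hmu]; ring
    have hsq : mw^2 < (mu + s₁*mw)^2 := by
      have e : (mu+s₁*mw)^2 = mu^2 + 2*(s₁*(mu*mw)) + s₁^2*mw^2 := by ring
      linarith
    have hnn : 0 ≤ mu + s₁*mw := by
      have := mul_nonneg hs1.le hmw0.le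
      linarith
    have h9 := abs_lt_of_sq_lt mw (mu + s₁*mw) hsq hnn
    rw [abs_of_pos hmw0] at h9
    linarith
  have hdotpos : 0 < dot := by
    have hdT : dot = mu^2 + T := by rw [hdotdef, hTdef, hmu]; ring
    have h1 : s₁*(mu*mw) ≤ (1-s₁)*(mu*mw) :=
      mul_le_mul_of_nonneg_right (by linarith) hmuw.le
    have h2 : (1-s₁)*(mu*mw) < mu*mu := by
      have h9 := mul_lt_mul_of_pos_right hmulb hmu0
      have e : (1-s₁)*(mu*mw) = (1-s₁)*mw*mu := by ring
      linarith
    have e2 : mu^2 = mu*mu := by ring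
    linarith [hdT, hTlb, h1, h2]
  have hcr2 : cross^2 < (s₁*(mu*mw))^2 := by
    have h := mul_self_lt_mul_self (abs_nonneg cross) hcross
    have e1 : abs cross * abs cross = cross^2 := by rw [← sq_abs cross]; ring
    have e2 : (s₁*(mu*mw))*(s₁*(mu*mw)) = (s₁*(mu*mw))^2 := by ring
    linarith
  have hdot : c₁*(mu*mw) < dot := by
    apply lt_of_pow_lt_pow_left₀ 2 hdotpos.le
    have e : (c₁*(mu*mw))^2 = mu^2*mw^2 - (s₁*(mu*mw))^2 := by
      linear_combination ((mu*mw)^2)*p1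
    linarith
  have hc0mu : 0 ≤ c₀*mu := mul_nonneg (by linarith) hmu0.le
  have hXu2 : (c₀*mu)^2 < Xu^2 := by
    have h := mul_self_lt_mul_self hc0mu hcu
    have e1 : abs Xu * abs Xu = Xu^2 := by rw [← sq_abs Xu]; ring
    have e2 : (c₀*mu)*(c₀*mu) = (c₀*mu)^2 := by ring
    linarith
  have hYu : |Yu| ≤ s₀*mu := by
    apply le_of_lt
    apply abs_lt_of_sq_lt _ _ _ (mul_nonneg hs0 hmu0.le)
    have e : (s₀*mu)^2 = mu^2 - (c₀*mu)^2 := by linear_combination (mu^2)*p0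
    linarith [hXu2, hmu]
  have hXu'2 : (c₀*mu')^2 < Xu'^2 := by
    have h := mul_self_lt_mul_self (mul_nonneg (by linarith) hmu'0.le) hcu'
    have e1 : abs Xu' * abs Xu' = Xu'^2 := by rw [← sq_abs Xu']; ring
    have e2 : (c₀*mu')*(c₀*mu') = (c₀*mu')^2 := by ring
    linarith
  have hYu' : |Yu'| ≤ s₀*mu' := by
    apply le_of_lt
    apply abs_lt_of_sq_lt _ _ _ (mul_nonneg hs0 hmu'0.le)
    have e : (s₀*mu')^2 = mu'^2 - (c₀*mu')^2 := by linear_combination (mu'^2)*p0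
    linarith [hXu'2, hmu']
  -- main sin-addition bound
  have SA : abs Yu * dot + abs Xu * abs cross < (s₀*c₁+c₀*s₁)*(mu^2*mw) := by
    apply sinadd s₀ c₀ s₁ c₁ mu mw (abs Xu) (abs Yu) dot (abs cross) p0 p1 hs0 hs0' hc0'
      hs1.le hs1' hc1' hmu0 hmw0 (abs_nonneg _) (abs_nonneg _) hdotpos.le (abs_nonneg _) _ _ hYu hcross
    · rw [sq_abs, sq_abs]; exact hmu.symm
    · rw [sq_abs]; exact lag
  have hYw : |Yw| < S * mw := by
    have idYw : mu^2*Yw = Xu*cross + Yu*dot := by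
      rw [hcrossdef, hdotdef]; linear_combination Yw*hmu
    have hmusq : (0:ℝ) < mu^2 := by positivity
    have habs : mu^2*(abs Yw) ≤ abs Xu * abs cross + abs Yu * dot := by
      have h1 : abs (mu^2*Yw) = mu^2*(abs Yw) := by
        rw [abs_mul, abs_of_nonneg hmusq.le]
      have h2 : abs (Xu*cross + Yu*dot) ≤ abs Xu * abs cross + abs Yu * abs dot := by
        calc abs (Xu*cross + Yu*dot) ≤ abs (Xu*cross) + abs (Yu*dot) := abs_add_le _ _
          _ = abs Xu * abs cross + abs Yu * abs dot := by rw [abs_mul, abs_mul]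
      rw [abs_of_pos hdotpos] at h2
      rw [← h1, idYw]; exact h2
    have hlt : mu^2*(abs Yw) < mu^2*(S*mw) := by
      have e : (s₀*c₁+c₀*s₁)*(mu^2*mw) = mu^2*((s₀*c₁+c₀*s₁)*mw) := by ring
      rw [hSexp]
      linarith [habs, SA]
    exact (mul_lt_mul_iff_right₀ hmusq).mp hlt
  refine ⟨hYw, ?_⟩
  have hYw2 : Yw^2 < (S*mw)^2 := by
    have h := mul_self_lt_mul_self (abs_nonneg Yw) hYw
    have e1 : abs Yw * abs Yw = Yw^2 := by rw [← sq_abs Yw]; ring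
    have e2 : (S*mw)*(S*mw) = (S*mw)^2 := by ring
    linarith
  have hXw : C * mw < |Xw| := by
    apply lt_of_pow_lt_pow_left₀ 2 (abs_nonneg _)
    have e : (C*mw)^2 = mw^2 - (S*mw)^2 := by linear_combination (mw^2)*pS
    have := sq_abs Xw
    linarith [hmw, hYw2]
  refine ⟨hXw, ?_⟩
  have hCmw : 0 ≤ C*mw := mul_nonneg (by linarith) hmw0.le
  -- sign linkage via u'
  have hdot' : 0 < Xw*Xu' + Yw*Yu' := by
    have id2 : 2*(Xw*Xu' + Yw*Yu') = mw^2 + mu'^2 - ((Xw-Xu')^2 + (Yw-Yu')^2) := by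
      rw [hmw, hmu']; ring
    have h9 : 0 < mu'^2 := by positivity
    linarith [id2, hcl', h9]
  have hCS : 0 < c₀*C - s₀*S := by
    have h : Real.cos (θ₀ + (θ₀+θ₁)) = c₀*C - s₀*S := Real.cos_add θ₀ (θ₀+θ₁)
    rw [← h]; exact hq2
  have h6' : 0 < (c₀*C - s₀*S)*(mw*mu') := mul_pos hCS (mul_pos hmw0 hmu'0)
  have h5 : Yw*Yu' ≤ (S*mw)*(s₀*mu') := by
    calc Yw*Yu' ≤ abs (Yw*Yu') := le_abs_self _
      _ = abs Yw * abs Yu' := abs_mul _ _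
      _ ≤ (S*mw)*(s₀*mu') := mul_le_mul hYw.le hYu' (abs_nonneg _) (by linarith [hYw, abs_nonneg Yw])
  constructor
  · intro hpos
    by_contra hneg
    push_neg at hneg
    have hXwne : Xw ≠ 0 := by
      intro h
      rw [h] at hXw
      simp at hXw
      linarith [hCmw]
    have hXwneg : Xw < 0 := lt_of_le_of_ne hneg hXwne
    have h1 : C*mw < -Xw := by rwa [abs_of_neg hXwneg] at hXw
    have h2 : c₀*mu' < Xu' := by rwa [abs_of_pos hpos] at hcu'
    have h3 : Xw*Xu' ≤ (-(C*mw))*Xu' :=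
      mul_le_mul_of_nonneg_right (by linarith) hpos.le
    have h4 : (-(C*mw))*Xu' ≤ (-(C*mw))*(c₀*mu') :=
      mul_le_mul_of_nonpos_left h2.le (by linarith)
    have e : (c₀*C - s₀*S)*(mw*mu') = -((-(C*mw))*(c₀*mu')) - (S*mw)*(s₀*mu') := by ring
    linarith [hdot', h3, h4, h5, h6']
  · intro hneg'
    by_contra hnn
    push_neg at hnn
    have hXwne : Xw ≠ 0 := by
      intro h
      rw [h] at hXw
      simp at hXw
      linarith [hCmw]
    have hXwpos : 0 < Xw := lt_of_le_of_ne hnn (Ne.symm hXwne)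
    have h1 : C*mw < Xw := by rwa [abs_of_pos hXwpos] at hXw
    have h2 : c₀*mu' < -Xu' := by rwa [abs_of_neg hneg'] at hcu'
    have h3 : Xw*(-Xu') ≥ (C*mw)*(c₀*mu') := by
      apply le_trans (mul_le_mul_of_nonneg_left h2.le hCmw)
      exact mul_le_mul_of_nonneg_right h1.le (by linarith)
    have e : (c₀*C - s₀*S)*(mw*mu') = (C*mw)*(c₀*mu') - (S*mw)*(s₀*mu') := by ring
    have e2 : Xw*(-Xu') = -(Xw*Xu') := by ring
    linarith [hdot', h3, h5, h6']

lemma normsq3 (x : EuclideanSpace ℝ (Fin 3)) : ‖x‖^2 = (x 0)^2 + (x 1)^2 + (x 2)^2 := by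
  rw [EuclideanSpace.norm_eq, Real.sq_sqrt (by positivity)]
  simp [Fin.sum_univ_three, Real.norm_eq_abs, sq_abs]

set_option maxHeartbeats 1000000 in
lemma core (θ₀ θ₁ : ℝ) (h0 : 0 ≤ θ₀) (h6 : θ₀ < Real.pi/6) (he : θ₁ = Real.pi/18 - θ₀/3)
    (a b c a' b' c' A B C nu nu' nw : ℝ)
    (hsu : a+b+c = 0) (hsu' : a'+b'+c' = 0) (hsw : A+B+C = 0)
    (hnu : nu^2 = a^2+b^2+c^2) (hnu' : nu'^2 = a'^2+b'^2+c'^2) (hnw : nw^2 = A^2+B^2+C^2)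
    (hnu0 : 0 < nu) (hnu'0 : 0 < nu') (hnw0 : 0 < nw)
    (hca : Real.sqrt 6/3*nu*Real.cos θ₀ < |a|)
    (hca' : Real.sqrt 6/3*nu'*Real.cos θ₀ < |a'|)
    (hcl : (A-a)^2+(B-b)^2+(C-c)^2 < (Real.sin θ₁)^2*nw^2)
    (hcl' : (A-a')^2+(B-b')^2+(C-c')^2 < nw^2) :
    (0 ≤ a' → Real.sqrt 6/3*Real.cos (Real.pi/3+θ₀+θ₁)*nw < A) ∧
    (0 ≤ b' → Real.sqrt 6/3*Real.cos (Real.pi/3+θ₀+θ₁)*nw < B) := by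
  obtain ⟨⟨hs0, hs0', hc0', hc0''⟩, ⟨hs1, hs1', hc1', hc1''⟩, ⟨hss, hss', hcs⟩, hq0, hq1, hq2⟩ :=
    trig_facts θ₀ θ₁ h0 h6 he
  have h2 : Real.sqrt 2^2 = 2 := Real.sq_sqrt (by norm_num)
  have h3 : Real.sqrt 3^2 = 3 := Real.sq_sqrt (by norm_num)
  have h36 := sqrt36
  have h3p : (0:ℝ) < Real.sqrt 3 := Real.sqrt_pos.mpr (by norm_num)
  have h2p : (0:ℝ) < Real.sqrt 2 := Real.sqrt_pos.mpr (by norm_num)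
  -- scaled coordinates
  set Xu := Real.sqrt 3 * a with hXu
  set Yu := b - c with hYu
  set Xu' := Real.sqrt 3 * a' with hXu'
  set Yu' := b' - c' with hYu'
  set Xw := Real.sqrt 3 * A with hXw
  set Yw := B - C with hYw
  set mu := Real.sqrt 2 * nu with hmu
  set mu' := Real.sqrt 2 * nu' with hmu'
  set mw := Real.sqrt 2 * nw with hmw
  have hmueq : mu^2 = Xu^2 + Yu^2 := by
    rw [hmu, hXu, hYu]
    linear_combination nu^2*h2 - a^2*h3 + 2*hnu + (b+c-a)*hsu
  have hmueq' : mu'^2 = Xu'^2 + Yu'^2 := by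
    rw [hmu', hXu', hYu']
    linear_combination nu'^2*h2 - a'^2*h3 + 2*hnu' + (b'+c'-a')*hsu'
  have hmweq : mw^2 = Xw^2 + Yw^2 := by
    rw [hmw, hXw, hYw]
    linear_combination nw^2*h2 - A^2*h3 + 2*hnw + (B+C-A)*hsw
  have hmu0 : 0 < mu := mul_pos h2p hnu0
  have hmu'0 : 0 < mu' := mul_pos h2p hnu'0
  have hmw0 : 0 < mw := mul_pos h2p hnw0
  have hcua : Real.cos θ₀ * mu < |Xu| := by
    have h := mul_lt_mul_of_pos_left hca h3p
    have e1 : Real.sqrt 3 * (Real.sqrt 6/3*nu*Real.cos θ₀) = Real.cos θ₀ * mu := by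
      rw [hmu]; linear_combination (nu*Real.cos θ₀/3)*h36
    have e2 : Real.sqrt 3 * |a| = |Xu| := by
      rw [hXu, abs_mul, abs_of_pos h3p]
    rw [e1, e2] at h; exact h
  have hcua' : Real.cos θ₀ * mu' < |Xu'| := by
    have h := mul_lt_mul_of_pos_left hca' h3p
    have e1 : Real.sqrt 3 * (Real.sqrt 6/3*nu'*Real.cos θ₀) = Real.cos θ₀ * mu' := by
      rw [hmu']; linear_combination (nu'*Real.cos θ₀/3)*h36
    have e2 : Real.sqrt 3 * |a'| = |Xu'| := by
      rw [hXu', abs_mul, abs_of_pos h3p]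
    rw [e1, e2] at h; exact h
  have hcld : (Xw-Xu)^2 + (Yw-Yu)^2 < (Real.sin θ₁)^2 * mw^2 := by
    have hdsum : (A-a)+(B-b)+(C-c) = 0 := by linarith
    have hid : (Xw-Xu)^2 + (Yw-Yu)^2 = 2*((A-a)^2+(B-b)^2+(C-c)^2) := by
      rw [hXw, hXu, hYw, hYu]
      linear_combination (A-a)^2*h3 + ((A-a)-(B-b)-(C-c))*hdsum
    have hmw2 : (Real.sin θ₁)^2*mw^2 = 2*((Real.sin θ₁)^2*nw^2) := by
      rw [hmw]; linear_combination ((Real.sin θ₁)^2*nw^2)*h2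
    rw [hid, hmw2]; linarith
  have hcld' : (Xw-Xu')^2 + (Yw-Yu')^2 < mw^2 := by
    have hdsum : (A-a')+(B-b')+(C-c') = 0 := by linarith
    have hid : (Xw-Xu')^2 + (Yw-Yu')^2 = 2*((A-a')^2+(B-b')^2+(C-c')^2) := by
      rw [hXw, hXu', hYw, hYu']
      linear_combination (A-a')^2*h3 + ((A-a')-(B-b')-(C-c'))*hdsum
    have hmw2 : mw^2 = 2*nw^2 := by rw [hmw]; linear_combination nw^2*h2
    rw [hid, hmw2]; linarith
  obtain ⟨hYwb, hXwb, l1, l2⟩ := master θ₀ θ₁ h0 h6 he Xu Yu Xu' Yu' Xw Yw mu mu' mw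
    hmueq hmueq' hmweq hmu0 hmu'0 hmw0 hcua hcua' hcld hcld'
  have hrw : Real.pi/3+θ₀+θ₁ = Real.pi/3+(θ₀+θ₁) := by ring
  have hA'exp : Real.cos (Real.pi/3+(θ₀+θ₁))
      = Real.cos (θ₀+θ₁)/2 - Real.sqrt 3/2*Real.sin (θ₀+θ₁) := by
    rw [Real.cos_add (Real.pi/3) (θ₀+θ₁), Real.cos_pi_div_three, Real.sin_pi_div_three]
    ring
  have key : Real.sqrt 3*(Real.sqrt 6/3*Real.cos (Real.pi/3+(θ₀+θ₁))*nw)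
      = Real.cos (Real.pi/3+(θ₀+θ₁))*mw := by
    rw [hmw]
    linear_combination (nw*Real.cos (Real.pi/3+(θ₀+θ₁))/3)*h36
  have hXu'ne : Xu' ≠ 0 := by
    intro h
    rw [h] at hcua'
    simp at hcua'
    have := mul_pos (show (0:ℝ) < Real.cos θ₀ by linarith) hmu'0
    linarith
  constructor
  · -- axis case : conclusion about A
    intro ha'
    have hXu'pos : 0 < Xu' :=
      lt_of_le_of_ne (mul_nonneg h3p.le ha') (Ne.symm hXu'ne)
    have hXwpos : 0 < Xw := l1 hXu'pos
    have hXwA : Real.cos (θ₀+θ₁)*mw < Xw := by rwa [abs_of_pos hXwpos] at hXwb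
    rw [hrw]
    apply (mul_lt_mul_iff_right₀ h3p).mp
    rw [key, ← hXw]
    have hle : Real.cos (Real.pi/3+(θ₀+θ₁)) ≤ Real.cos (θ₀+θ₁) := by
      rw [hA'exp]
      have h9 := mul_nonneg h3p.le hss
      have e9 : Real.sqrt 3/2*Real.sin (θ₀+θ₁) = (Real.sqrt 3*Real.sin (θ₀+θ₁))/2 := by ring
      linarith
    have := mul_le_mul_of_nonneg_right hle hmw0.le
    linarith
  · -- off-axis case : conclusion about B
    intro hb'
    have hq0exp : Real.cos (Real.pi/3+θ₀) = Real.cos θ₀/2 - Real.sqrt 3/2*Real.sin θ₀ := by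
      rw [Real.cos_add (Real.pi/3) θ₀, Real.cos_pi_div_three, Real.sin_pi_div_three]
      ring
    have htan : Real.sqrt 3*Real.sin θ₀ < Real.cos θ₀ := by
      rw [hq0exp] at hq0; linarith
    have habs' : abs Yu' ≤ Real.sin θ₀ * mu' := by
      have hXu'2 : (Real.cos θ₀*mu')^2 < Xu'^2 := by
        have h := mul_self_lt_mul_self (mul_nonneg (by linarith) hmu'0.le) hcua'
        have e1 : abs Xu' * abs Xu' = Xu'^2 := by rw [← sq_abs Xu']; ring
        have e2 : (Real.cos θ₀*mu')*(Real.cos θ₀*mu') = (Real.cos θ₀*mu')^2 := by ring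
        linarith
      apply le_of_lt
      apply abs_lt_of_sq_lt _ _ _ (mul_nonneg hs0 hmu'0.le)
      have e : (Real.sin θ₀*mu')^2 = mu'^2 - (Real.cos θ₀*mu')^2 := by
        linear_combination (mu'^2)*(Real.sin_sq_add_cos_sq θ₀)
      linarith [hXu'2, hmueq']
    have hXu'neg : Xu' < 0 := by
      rcases lt_or_gt_of_ne hXu'ne with h | h
      · exact h
      exfalso
      have h2b : Real.cos θ₀*mu' < Xu' := by rwa [abs_of_pos h] at hcua'
      have eb : Real.sqrt 3*Yu' - Xu' = 2*(Real.sqrt 3*b') := by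
        rw [hYu', hXu']; linear_combination (-(Real.sqrt 3))*hsu'
      have hb3 : 0 ≤ Real.sqrt 3*b' := mul_nonneg h3p.le hb'
      have c1 : Real.sqrt 3*Yu' ≤ Real.sqrt 3*(abs Yu') :=
        mul_le_mul_of_nonneg_left (le_abs_self _) h3p.le
      have c2 : Real.sqrt 3*(abs Yu') ≤ Real.sqrt 3*(Real.sin θ₀*mu') :=
        mul_le_mul_of_nonneg_left habs' h3p.le
      have c3 : (Real.sqrt 3*Real.sin θ₀)*mu' < Real.cos θ₀*mu' :=
        mul_lt_mul_of_pos_right htan hmu'0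
      have e3 : Real.sqrt 3*(Real.sin θ₀*mu') = (Real.sqrt 3*Real.sin θ₀)*mu' := by ring
      linarith
    have hXwneg : Xw < 0 := l2 hXu'neg
    have hXwB : Real.cos (θ₀+θ₁)*mw < -Xw := by rwa [abs_of_neg hXwneg] at hXwb
    rw [hrw]
    apply (mul_lt_mul_iff_right₀ h3p).mp
    rw [key]
    have eB : Real.sqrt 3*Yw - Xw = 2*(Real.sqrt 3*B) := by
      rw [hYw, hXw]; linear_combination (-(Real.sqrt 3))*hsw
    have hYwlb : -(Real.sin (θ₀+θ₁)*mw) < Yw := (abs_lt.mp hYwb).1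
    have c1 : Real.sqrt 3*(-(Real.sin (θ₀+θ₁)*mw)) < Real.sqrt 3*Yw :=
      mul_lt_mul_of_pos_left hYwlb h3p
    have e2 : Real.cos (Real.pi/3+(θ₀+θ₁))*mw
        = (Real.cos (θ₀+θ₁)/2)*mw - (Real.sqrt 3/2)*(Real.sin (θ₀+θ₁)*mw) := by
      rw [hA'exp]; ring
    have e3 : Real.sqrt 3*(-(Real.sin (θ₀+θ₁)*mw)) = -(Real.sqrt 3*(Real.sin (θ₀+θ₁)*mw)) := by
      ring
    linarith

set_option maxHeartbeats 1000000 in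
lemma keyvec (θ₀ θ₁ : ℝ) (h0 : 0 ≤ θ₀) (h6 : θ₀ < Real.pi/6) (he : θ₁ = Real.pi/18 - θ₀/3)
    (w u u' : EuclideanSpace ℝ (Fin 3)) (j₀ p q j : Fin 3)
    (hperm : (j₀ = 0 ∧ p = 1 ∧ q = 2) ∨ (j₀ = 0 ∧ p = 2 ∧ q = 1) ∨
      (j₀ = 1 ∧ p = 0 ∧ q = 2) ∨ (j₀ = 1 ∧ p = 2 ∧ q = 0) ∨
      (j₀ = 2 ∧ p = 0 ∧ q = 1) ∨ (j₀ = 2 ∧ p = 1 ∧ q = 0))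
    (hj : j = j₀ ∨ j = p)
    (hsw : w 0 + w 1 + w 2 = 0) (hsu : u 0 + u 1 + u 2 = 0) (hsu' : u' 0 + u' 1 + u' 2 = 0)
    (hw0 : 0 < ‖w‖) (hu0 : 0 < ‖u‖) (hu'0 : 0 < ‖u'‖)
    (hcu : Real.sqrt 6/3*‖u‖*Real.cos θ₀ < |u j₀|)
    (hcu' : Real.sqrt 6/3*‖u'‖*Real.cos θ₀ < |u' j₀|)
    (hclu : ‖w - u‖ < Real.sin θ₁ * ‖w‖)
    (hclu' : ‖w - u'‖ < ‖w‖)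
    (hord : 0 ≤ u' j) :
    Real.sqrt 6/3*Real.cos (Real.pi/3+θ₀+θ₁)*‖w‖ < w j := by
  have hsub : ∀ (x y : EuclideanSpace ℝ (Fin 3)) (i : Fin 3), (x - y) i = x i - y i := by
    intro x y i; simp
  have hclsq : (w 0 - u 0)^2 + (w 1 - u 1)^2 + (w 2 - u 2)^2 < (Real.sin θ₁)^2*‖w‖^2 := by
    have h1 := mul_self_lt_mul_self (norm_nonneg (w - u)) hclu
    have h2 := normsq3 (w - u)
    rw [hsub, hsub, hsub] at h2
    nlinarith [h1, h2]
  have hclsq' : (w 0 - u' 0)^2 + (w 1 - u' 1)^2 + (w 2 - u' 2)^2 < ‖w‖^2 := by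
    have h1 := mul_self_lt_mul_self (norm_nonneg (w - u')) hclu'
    have h2 := normsq3 (w - u')
    rw [hsub, hsub, hsub] at h2
    nlinarith [h1, h2]
  have hsw3 : w j₀ + w p + w q = 0 := by
    rcases hperm with ⟨h1,h2,h3⟩|⟨h1,h2,h3⟩|⟨h1,h2,h3⟩|⟨h1,h2,h3⟩|⟨h1,h2,h3⟩|⟨h1,h2,h3⟩ <;>
      (subst h1; subst h2; subst h3; linarith)
  have hsu3 : u j₀ + u p + u q = 0 := by
    rcases hperm with ⟨h1,h2,h3⟩|⟨h1,h2,h3⟩|⟨h1,h2,h3⟩|⟨h1,h2,h3⟩|⟨h1,h2,h3⟩|⟨h1,h2,h3⟩ <;>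
      (subst h1; subst h2; subst h3; linarith)
  have hsu'3 : u' j₀ + u' p + u' q = 0 := by
    rcases hperm with ⟨h1,h2,h3⟩|⟨h1,h2,h3⟩|⟨h1,h2,h3⟩|⟨h1,h2,h3⟩|⟨h1,h2,h3⟩|⟨h1,h2,h3⟩ <;>
      (subst h1; subst h2; subst h3; linarith)
  have hnw3 : ‖w‖^2 = (w j₀)^2 + (w p)^2 + (w q)^2 := by
    rcases hperm with ⟨h1,h2,h3⟩|⟨h1,h2,h3⟩|⟨h1,h2,h3⟩|⟨h1,h2,h3⟩|⟨h1,h2,h3⟩|⟨h1,h2,h3⟩ <;>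
      (subst h1; subst h2; subst h3; rw [normsq3]; try ring)
  have hnu3 : ‖u‖^2 = (u j₀)^2 + (u p)^2 + (u q)^2 := by
    rcases hperm with ⟨h1,h2,h3⟩|⟨h1,h2,h3⟩|⟨h1,h2,h3⟩|⟨h1,h2,h3⟩|⟨h1,h2,h3⟩|⟨h1,h2,h3⟩ <;>
      (subst h1; subst h2; subst h3; rw [normsq3]; try ring)
  have hnu'3 : ‖u'‖^2 = (u' j₀)^2 + (u' p)^2 + (u' q)^2 := by
    rcases hperm with ⟨h1,h2,h3⟩|⟨h1,h2,h3⟩|⟨h1,h2,h3⟩|⟨h1,h2,h3⟩|⟨h1,h2,h3⟩|⟨h1,h2,h3⟩ <;>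
      (subst h1; subst h2; subst h3; rw [normsq3]; try ring)
  have hcl3 : (w j₀ - u j₀)^2 + (w p - u p)^2 + (w q - u q)^2 < (Real.sin θ₁)^2*‖w‖^2 := by
    rcases hperm with ⟨h1,h2,h3⟩|⟨h1,h2,h3⟩|⟨h1,h2,h3⟩|⟨h1,h2,h3⟩|⟨h1,h2,h3⟩|⟨h1,h2,h3⟩ <;>
      (subst h1; subst h2; subst h3; linarith)
  have hcl3' : (w j₀ - u' j₀)^2 + (w p - u' p)^2 + (w q - u' q)^2 < ‖w‖^2 := by
    rcases hperm with ⟨h1,h2,h3⟩|⟨h1,h2,h3⟩|⟨h1,h2,h3⟩|⟨h1,h2,h3⟩|⟨h1,h2,h3⟩|⟨h1,h2,h3⟩ <;>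
      (subst h1; subst h2; subst h3; linarith)
  have main := core θ₀ θ₁ h0 h6 he (u j₀) (u p) (u q) (u' j₀) (u' p) (u' q)
    (w j₀) (w p) (w q) ‖u‖ ‖u'‖ ‖w‖ hsu3 hsu'3 hsw3 hnu3 hnu'3 hnw3 hu0 hu'0 hw0
    hcu hcu' hcl3 hcl3'
  rcases hj with rfl | rfl
  · exact main.1 hord
  · exact main.2 hord

set_option maxHeartbeats 1600000 in
/-- `W_{γ',0} \ W_{γ,t} ⊆ B_t(γ) ∪ (W_{γ',0} \ U_γ^j)^{>γ_j}`. -/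
theorem whitney_difference_decomposition (θ₀ : ℝ) (hθ0 : 0 ≤ θ₀)
    (hθ6 : θ₀ < Real.pi / 6)
    (j₀ : Fin 3) (Γ : Set (EuclideanSpace ℝ (Fin 3)))
    (hΓV : Γ ⊆ {ξ : EuclideanSpace ℝ (Fin 3) | ξ 0 + ξ 1 + ξ 2 = 0})
    (hclosed : IsClosed Γ)
    (hcone : ∀ γ ∈ Γ, ∀ γ' ∈ Γ, γ ≠ γ' →
      Real.sqrt 6 / 3 * ‖γ - γ'‖ * Real.cos θ₀ < |(γ - γ') j₀|)
    (θ₁ δ₁ δ₂ : ℝ)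
    (hθ₁ : θ₁ = Real.pi / 18 - θ₀ / 3)
    (hδ₁ : δ₁ = Real.sin θ₁)
    (hδ₂ : δ₂ = Real.sqrt 6 / 3 * Real.cos (Real.pi / 3 + θ₀ + θ₁))
    (t : ℝ) (ht : 0 < t)
    (γ γ' : EuclideanSpace ℝ (Fin 3)) (hγ : γ ∈ Γ) (hγ' : γ' ∈ Γ)
    (j : Fin 3) (horder : γ j ≤ γ' j) :
    {β ∈ {ξ : EuclideanSpace ℝ (Fin 3) | ξ 0 + ξ 1 + ξ 2 = 0} |
        ‖β - γ'‖ ≤ (1 / δ₁) * infDist β Γ} \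
      {β ∈ {ξ : EuclideanSpace ℝ (Fin 3) | ξ 0 + ξ 1 + ξ 2 = 0} |
        t ≤ ‖β - γ‖ ∧ ‖β - γ‖ ≤ (1 / δ₁) * infDist β Γ} ⊆
    Metric.ball γ t ∪
      {β ∈ {ξ : EuclideanSpace ℝ (Fin 3) | ξ 0 + ξ 1 + ξ 2 = 0} |
        (‖β - γ'‖ ≤ (1 / δ₁) * infDist β Γ ∧ ¬ |β j - γ j| ≤ δ₂ * ‖β - γ‖) ∧
          γ j < β j} := by
  intro β hβ
  simp only [Set.mem_diff, Set.mem_setOf_eq] at hβ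
  obtain ⟨⟨hβV, hβW'⟩, hnot⟩ := hβ
  by_cases hb : ‖β - γ‖ < t
  · left
    rwa [Metric.mem_ball, dist_eq_norm]
  right
  have ht' : t ≤ ‖β - γ‖ := not_lt.mp hb
  have hr0 : 0 < ‖β - γ‖ := lt_of_lt_of_le ht ht'
  obtain ⟨_, ⟨hs1pos, hs1half, _, _⟩, _, _, hq1, _⟩ := trig_facts θ₀ θ₁ hθ0 hθ6 hθ₁
  have δ₁pos : 0 < δ₁ := by rw [hδ₁]; exact hs1pos
  have hnle : ¬(‖β - γ‖ ≤ 1/δ₁ * infDist β Γ) := fun hle => hnot ⟨hβV, ht', hle⟩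
  have hlt2 : 1/δ₁ * infDist β Γ < ‖β - γ‖ := not_le.mp hnle
  have hdist : infDist β Γ < δ₁ * ‖β - γ‖ := by
    have e : infDist β Γ = δ₁*(1/δ₁ * infDist β Γ) := by field_simp
    calc infDist β Γ = δ₁*(1/δ₁ * infDist β Γ) := e
      _ < δ₁*‖β - γ‖ := mul_lt_mul_of_pos_left hlt2 δ₁pos
  have hβγ' : ‖β - γ'‖ < ‖β - γ‖ := lt_of_le_of_lt hβW' hlt2
  obtain ⟨gt, hgtΓ, hgtd⟩ := hclosed.exists_infDist_eq_dist ⟨γ, hγ⟩ β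
  have hclu : ‖β - gt‖ < Real.sin θ₁ * ‖β - γ‖ := by
    rw [← dist_eq_norm, ← hgtd]
    rw [hδ₁] at hdist
    exact hdist
  have hgtne : gt ≠ γ := by
    intro hEq
    rw [hEq] at hclu
    have h9 : Real.sin θ₁ * ‖β - γ‖ ≤ (1/2) * ‖β - γ‖ :=
      mul_le_mul_of_nonneg_right hs1half (norm_nonneg _)
    linarith
  have hγ'ne : γ' ≠ γ := by
    intro hEq
    rw [hEq] at hβW'
    exact hnle hβW'
  have hcu : Real.sqrt 6/3*‖gt - γ‖*Real.cos θ₀ < |(gt - γ) j₀| := hcone gt hgtΓ γ hγ hgtne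
  have hcu' : Real.sqrt 6/3*‖γ' - γ‖*Real.cos θ₀ < |(γ' - γ) j₀| := hcone γ' hγ' γ hγ hγ'ne
  have hu0 : 0 < ‖gt - γ‖ := by
    rw [norm_pos_iff]
    exact sub_ne_zero_of_ne hgtne
  have hu'0 : 0 < ‖γ' - γ‖ := by
    rw [norm_pos_iff]
    exact sub_ne_zero_of_ne hγ'ne
  have hsub : ∀ (x y : EuclideanSpace ℝ (Fin 3)) (i : Fin 3), (x - y) i = x i - y i := by
    intro x y i; simp
  have hγV : γ 0 + γ 1 + γ 2 = 0 := hΓV hγ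
  have hγ'V : γ' 0 + γ' 1 + γ' 2 = 0 := hΓV hγ'
  have hgtV : gt 0 + gt 1 + gt 2 = 0 := hΓV hgtΓ
  have hsw : (β - γ) 0 + (β - γ) 1 + (β - γ) 2 = 0 := by
    rw [hsub, hsub, hsub]; linarith
  have hsu : (gt - γ) 0 + (gt - γ) 1 + (gt - γ) 2 = 0 := by
    rw [hsub, hsub, hsub]; linarith
  have hsu' : (γ' - γ) 0 + (γ' - γ) 1 + (γ' - γ) 2 = 0 := by
    rw [hsub, hsub, hsub]; linarith
  have hcluW : ‖(β - γ) - (gt - γ)‖ < Real.sin θ₁ * ‖β - γ‖ := by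
    rwa [sub_sub_sub_cancel_right]
  have hclu'W : ‖(β - γ) - (γ' - γ)‖ < ‖β - γ‖ := by
    rwa [sub_sub_sub_cancel_right]
  have hord : 0 ≤ (γ' - γ) j := by
    rw [hsub]; linarith
  have final : Real.sqrt 6/3*Real.cos (Real.pi/3+θ₀+θ₁)*‖β - γ‖ < (β - γ) j := by
    have hj0 : j₀ = 0 ∨ j₀ = 1 ∨ j₀ = 2 := by fin_cases j₀ <;> simp
    have hjj : j = 0 ∨ j = 1 ∨ j = 2 := by fin_cases j <;> simp
    rcases hj0 with rfl | rfl | rfl <;> rcases hjj with rfl | rfl | rfl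
    · exact keyvec θ₀ θ₁ hθ0 hθ6 hθ₁ (β-γ) (gt-γ) (γ'-γ) 0 1 2 0 (by simp)
        (Or.inl rfl) hsw hsu hsu' hr0 hu0 hu'0 hcu hcu' hcluW hclu'W hord
    · exact keyvec θ₀ θ₁ hθ0 hθ6 hθ₁ (β-γ) (gt-γ) (γ'-γ) 0 1 2 1 (by simp)
        (Or.inr rfl) hsw hsu hsu' hr0 hu0 hu'0 hcu hcu' hcluW hclu'W hord
    · exact keyvec θ₀ θ₁ hθ0 hθ6 hθ₁ (β-γ) (gt-γ) (γ'-γ) 0 2 1 2 (by simp)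
        (Or.inr rfl) hsw hsu hsu' hr0 hu0 hu'0 hcu hcu' hcluW hclu'W hord
    · exact keyvec θ₀ θ₁ hθ0 hθ6 hθ₁ (β-γ) (gt-γ) (γ'-γ) 1 0 2 0 (by simp)
        (Or.inr rfl) hsw hsu hsu' hr0 hu0 hu'0 hcu hcu' hcluW hclu'W hord
    · exact keyvec θ₀ θ₁ hθ0 hθ6 hθ₁ (β-γ) (gt-γ) (γ'-γ) 1 0 2 1 (by simp)
        (Or.inl rfl) hsw hsu hsu' hr0 hu0 hu'0 hcu hcu' hcluW hclu'W hord
    · exact keyvec θ₀ θ₁ hθ0 hθ6 hθ₁ (β-γ) (gt-γ) (γ'-γ) 1 2 0 2 (by simp)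
        (Or.inr rfl) hsw hsu hsu' hr0 hu0 hu'0 hcu hcu' hcluW hclu'W hord
    · exact keyvec θ₀ θ₁ hθ0 hθ6 hθ₁ (β-γ) (gt-γ) (γ'-γ) 2 0 1 0 (by simp)
        (Or.inr rfl) hsw hsu hsu' hr0 hu0 hu'0 hcu hcu' hcluW hclu'W hord
    · exact keyvec θ₀ θ₁ hθ0 hθ6 hθ₁ (β-γ) (gt-γ) (γ'-γ) 2 1 0 1 (by simp)
        (Or.inr rfl) hsw hsu hsu' hr0 hu0 hu'0 hcu hcu' hcluW hclu'W hord
    · exact keyvec θ₀ θ₁ hθ0 hθ6 hθ₁ (β-γ) (gt-γ) (γ'-γ) 2 0 1 2 (by simp)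
        (Or.inl rfl) hsw hsu hsu' hr0 hu0 hu'0 hcu hcu' hcluW hclu'W hord
  have hfj : (β - γ) j = β j - γ j := hsub β γ j
  have hδ₂nn : 0 ≤ δ₂ := by
    rw [hδ₂]
    have e : Real.pi/3+θ₀+θ₁ = Real.pi/3+(θ₀+θ₁) := by ring
    rw [e]
    exact mul_nonneg (by positivity) hq1.le
  have hkey : δ₂ * ‖β - γ‖ < β j - γ j := by
    rw [hδ₂]
    rw [hfj] at final
    exact final
  refine ⟨hβV, ⟨hβW', ?_⟩, ?_⟩
  · exact not_le.mpr (lt_of_lt_of_le hkey (le_abs_self _))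
  · have := mul_nonneg hδ₂nn (norm_nonneg (β - γ))
    linarith
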